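/- With h_3(l) = max{2e·l^{3/2}/√N, 10·N^{1/8}}, the sum A_i = Σ_{l=0}^{i−1} √(h_3(l)/N) satisfies A_i ≤ √(2e)·i^{7/4}/N^{3/4} + C·N^{−1/48} for some absolute constant C, for all i ≤ N^{1/2}. -/

import Mathlib

lemma sqrt_add_le' {x y : ℝ} (hx : 0 ≤ x) (hy : 0 ≤ y) :
    Real.sqrt (x + y) ≤ Real.sqrt x + Real.sqrt y := by
  have h1 := Real.sq_sqrt hx
  have h2 := Real.sq_sqrt hy
  have h3 := Real.sqrt_nonneg x
  have h4 := Real.sqrt_nonneg y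
  rw [show Real.sqrt x + Real.sqrt y = Real.sqrt ((Real.sqrt x + Real.sqrt y) ^ 2) from
    (Real.sqrt_sq (by positivity)).symm]
  apply Real.sqrt_le_sqrt
  nlinarith

lemma sqrt_rpow' {x : ℝ} (hx : 0 ≤ x) (y : ℝ) : Real.sqrt (x ^ y) = x ^ (y / 2) := by
  rw [Real.sqrt_eq_rpow, ← Real.rpow_mul hx]
  ring_nf

theorem A_i_bound :
    ∃ C : ℝ, 0 < C ∧ ∀ N : ℝ, 2 ≤ N → ∀ i : ℕ, 1 ≤ i → (i : ℝ) ≤ Real.sqrt N →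
      (∑ l ∈ Finset.range i,
          Real.sqrt ((max (2 * Real.exp 1 * (l : ℝ) ^ ((3 : ℝ) / 2) / Real.sqrt N)
              (10 * N ^ ((1 : ℝ) / 8))) / N))
        ≤ Real.sqrt (2 * Real.exp 1) * (i : ℝ) ^ ((7 : ℝ) / 4) / N ^ ((3 : ℝ) / 4)
            + C * N ^ (-(1 : ℝ) / 48) := by
  refine ⟨12, by norm_num, ?_⟩
  intro N hN i hi _
  have hN0 : (0:ℝ) < N := by linarith
  have hN1 : (1:ℝ) ≤ N := by linarith
  have hsN : (0:ℝ) < Real.sqrt N := Real.sqrt_pos.mpr hN0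
  have hi0 : (0:ℝ) < (i:ℝ) := by exact_mod_cast Nat.lt_of_lt_of_le Nat.zero_lt_one hi
  have he2 : (2:ℝ) ≤ Real.exp 1 := by
    have := Real.exp_one_gt_d9; linarith
  set m : ℕ := ⌈2 * N ^ ((5:ℝ)/12)⌉₊ with hm
  have hpow32 : Real.sqrt N * N = N ^ ((3:ℝ)/2) := by
    have : N ^ ((1:ℝ)/2) * N ^ (1:ℝ) = N ^ ((3:ℝ)/2) := by
      rw [← Real.rpow_add hN0]; norm_num
    rw [Real.sqrt_eq_rpow, ← this, Real.rpow_one]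
  set M : ℝ := Real.sqrt (2 * Real.exp 1) * (i:ℝ) ^ ((3:ℝ)/4) / N ^ ((3:ℝ)/4) with hM
  -- bound for the first branch
  have main_bd : ∀ l : ℕ, l < i →
      Real.sqrt (2 * Real.exp 1 * (l:ℝ) ^ ((3:ℝ)/2) / Real.sqrt N / N) ≤ M := by
    intro l hl
    have hl' : (l:ℝ) ≤ (i:ℝ) := by exact_mod_cast hl.le
    have h1 : 2 * Real.exp 1 * (l:ℝ) ^ ((3:ℝ)/2) / Real.sqrt N / N
        ≤ 2 * Real.exp 1 * (i:ℝ) ^ ((3:ℝ)/2) / N ^ ((3:ℝ)/2) := by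
      rw [div_div, hpow32]
      have : (l:ℝ) ^ ((3:ℝ)/2) ≤ (i:ℝ) ^ ((3:ℝ)/2) :=
        Real.rpow_le_rpow (Nat.cast_nonneg l) hl' (by norm_num)
      have hp : (0:ℝ) < N ^ ((3:ℝ)/2) := Real.rpow_pos_of_pos hN0 _
      gcongr
    calc Real.sqrt (2 * Real.exp 1 * (l:ℝ) ^ ((3:ℝ)/2) / Real.sqrt N / N)
        ≤ Real.sqrt (2 * Real.exp 1 * (i:ℝ) ^ ((3:ℝ)/2) / N ^ ((3:ℝ)/2)) :=
          Real.sqrt_le_sqrt h1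
      _ = M := by
          rw [Real.sqrt_div (by positivity), Real.sqrt_mul (by positivity),
            sqrt_rpow' (Nat.cast_nonneg i), sqrt_rpow' hN0.le, hM]
          norm_num
  -- bound for the second branch
  have b_bd : Real.sqrt (10 * N ^ ((1:ℝ)/8) / N) ≤ 4 * N ^ (-(7:ℝ)/16) := by
    have hq : N ^ ((1:ℝ)/8) / N = N ^ (-(7:ℝ)/8) := by
      rw [show (-(7:ℝ)/8) = (1:ℝ)/8 - 1 by norm_num, Real.rpow_sub hN0, Real.rpow_one]
    rw [mul_div_assoc, hq]
    have h1 : (10:ℝ) * N ^ (-(7:ℝ)/8) ≤ 16 * N ^ (-(7:ℝ)/8) := by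
      have := Real.rpow_pos_of_pos hN0 (-(7:ℝ)/8); nlinarith
    calc Real.sqrt (10 * N ^ (-(7:ℝ)/8)) ≤ Real.sqrt (16 * N ^ (-(7:ℝ)/8)) :=
        Real.sqrt_le_sqrt h1
      _ = 4 * N ^ (-(7:ℝ)/16) := by
        rw [Real.sqrt_mul (by norm_num), sqrt_rpow' hN0.le,
          show Real.sqrt 16 = 4 by
            rw [show (16:ℝ) = 4 ^ 2 by norm_num, Real.sqrt_sq (by norm_num)]]
        norm_num
  -- for l ≥ m the first branch dominates
  have cond : ∀ l : ℕ, ¬ l < m →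
      10 * N ^ ((1:ℝ)/8) ≤ 2 * Real.exp 1 * (l:ℝ) ^ ((3:ℝ)/2) / Real.sqrt N := by
    intro l hl
    have hml : (m:ℝ) ≤ (l:ℝ) := by exact_mod_cast (not_lt.mp hl)
    have hTl : 2 * N ^ ((5:ℝ)/12) ≤ (l:ℝ) := le_trans (Nat.le_ceil _) hml
    have h2 : (2 * N ^ ((5:ℝ)/12)) ^ ((3:ℝ)/2) ≤ (l:ℝ) ^ ((3:ℝ)/2) :=
      Real.rpow_le_rpow (by positivity) hTl (by norm_num)
    have h3 : (2 * N ^ ((5:ℝ)/12)) ^ ((3:ℝ)/2) = 2 ^ ((3:ℝ)/2) * N ^ ((5:ℝ)/8) := by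
      rw [Real.mul_rpow (by norm_num) (by positivity), ← Real.rpow_mul hN0.le]
      norm_num
    have h6 : (2:ℝ) ≤ 2 ^ ((3:ℝ)/2) := by
      calc (2:ℝ) = 2 ^ (1:ℝ) := (Real.rpow_one 2).symm
        _ ≤ 2 ^ ((3:ℝ)/2) := Real.rpow_le_rpow_of_exponent_le (by norm_num) (by norm_num)
    have he9 : (2.7182818283:ℝ) < Real.exp 1 := Real.exp_one_gt_d9
    rw [le_div_iff₀ hsN]
    have h5 : N ^ ((1:ℝ)/8) * Real.sqrt N = N ^ ((5:ℝ)/8) := by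
      rw [Real.sqrt_eq_rpow, ← Real.rpow_add hN0]; norm_num
    have hNp : (0:ℝ) < N ^ ((5:ℝ)/8) := Real.rpow_pos_of_pos hN0 _
    have hepos : (0:ℝ) ≤ 2 * Real.exp 1 := by positivity
    have h8 : (10:ℝ) ≤ 2 * Real.exp 1 * 2 ^ ((3:ℝ)/2) := by
      have := mul_le_mul_of_nonneg_left h6 hepos
      nlinarith
    have h7 : 10 * N ^ ((5:ℝ)/8) ≤ 2 * Real.exp 1 * (2 ^ ((3:ℝ)/2) * N ^ ((5:ℝ)/8)) := by
      have := mul_le_mul_of_nonneg_right h8 hNp.le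
      nlinarith
    calc 10 * N ^ ((1:ℝ)/8) * Real.sqrt N = 10 * N ^ ((5:ℝ)/8) := by
          rw [mul_assoc, h5]
      _ ≤ 2 * Real.exp 1 * (2 ^ ((3:ℝ)/2) * N ^ ((5:ℝ)/8)) := h7
      _ = 2 * Real.exp 1 * ((2 * N ^ ((5:ℝ)/12)) ^ ((3:ℝ)/2)) := by rw [h3]
      _ ≤ 2 * Real.exp 1 * (l:ℝ) ^ ((3:ℝ)/2) :=
          mul_le_mul_of_nonneg_left h2 (by positivity)
  -- pointwise bound
  have key : ∀ l ∈ Finset.range i,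
      Real.sqrt ((max (2 * Real.exp 1 * (l : ℝ) ^ ((3 : ℝ) / 2) / Real.sqrt N)
              (10 * N ^ ((1 : ℝ) / 8))) / N)
        ≤ M + (if l < m then 4 * N ^ (-(7:ℝ)/16) else 0) := by
    intro l hl
    have hli : l < i := Finset.mem_range.mp hl
    have ha0 : 0 ≤ 2 * Real.exp 1 * (l:ℝ) ^ ((3:ℝ)/2) / Real.sqrt N := by positivity
    have hb0 : (0:ℝ) ≤ 10 * N ^ ((1:ℝ)/8) := by positivity
    by_cases hlm : l < m
    · rw [if_pos hlm]
      have hmax : (max (2 * Real.exp 1 * (l : ℝ) ^ ((3 : ℝ) / 2) / Real.sqrt N)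
              (10 * N ^ ((1 : ℝ) / 8))) / N
          ≤ 2 * Real.exp 1 * (l:ℝ) ^ ((3:ℝ)/2) / Real.sqrt N / N
            + 10 * N ^ ((1:ℝ)/8) / N := by
        rw [← add_div]
        gcongr
        exact max_le (by linarith) (by linarith)
      calc Real.sqrt _ ≤ Real.sqrt (2 * Real.exp 1 * (l:ℝ) ^ ((3:ℝ)/2) / Real.sqrt N / N
            + 10 * N ^ ((1:ℝ)/8) / N) := Real.sqrt_le_sqrt hmax
        _ ≤ Real.sqrt (2 * Real.exp 1 * (l:ℝ) ^ ((3:ℝ)/2) / Real.sqrt N / N)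
            + Real.sqrt (10 * N ^ ((1:ℝ)/8) / N) :=
            sqrt_add_le' (by positivity) (by positivity)
        _ ≤ M + 4 * N ^ (-(7:ℝ)/16) := add_le_add (main_bd l hli) b_bd
    · rw [if_neg hlm, add_zero, max_eq_left (cond l hlm)]
      exact main_bd l hli
  -- sum the bounds
  have hsum := Finset.sum_le_sum key
  rw [Finset.sum_add_distrib, Finset.sum_const, Finset.card_range, nsmul_eq_mul] at hsum
  -- main term
  have hmain : (i:ℝ) * M = Real.sqrt (2 * Real.exp 1) * (i : ℝ) ^ ((7 : ℝ) / 4) / N ^ ((3 : ℝ) / 4) := by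
    have : (i:ℝ) ^ ((7:ℝ)/4) = (i:ℝ) ^ ((3:ℝ)/4) * (i:ℝ) := by
      rw [show (7:ℝ)/4 = (3:ℝ)/4 + 1 by norm_num, Real.rpow_add_one (ne_of_gt hi0)]
    rw [hM, this]; ring
  -- error term
  have herr : (∑ l ∈ Finset.range i, (if l < m then 4 * N ^ (-(7:ℝ)/16) else 0))
      ≤ 12 * N ^ (-(1:ℝ)/48) := by
    have hc0 : (0:ℝ) ≤ 4 * N ^ (-(7:ℝ)/16) := by positivity
    have h1 : (∑ l ∈ Finset.range i, (if l < m then 4 * N ^ (-(7:ℝ)/16) else 0))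
        = ∑ l ∈ (Finset.range i).filter (· < m), (4 * N ^ (-(7:ℝ)/16)) := by
      rw [Finset.sum_filter]
    have h2 : ((Finset.range i).filter (· < m)).card ≤ m := by
      calc ((Finset.range i).filter (· < m)).card ≤ (Finset.range m).card := by
            apply Finset.card_le_card
            intro x hx
            simp only [Finset.mem_filter, Finset.mem_range] at hx ⊢
            exact hx.2
        _ = m := Finset.card_range m
    have hm_le : (m:ℝ) ≤ 3 * N ^ ((5:ℝ)/12) := by
      have ha : (m:ℝ) < 2 * N ^ ((5:ℝ)/12) + 1 := Nat.ceil_lt_add_one (by positivity)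
      have hb : (1:ℝ) ≤ N ^ ((5:ℝ)/12) := Real.one_le_rpow hN1 (by norm_num)
      linarith
    have h3 : N ^ ((5:ℝ)/12) * N ^ (-(7:ℝ)/16) = N ^ (-(1:ℝ)/48) := by
      rw [← Real.rpow_add hN0]; norm_num
    calc (∑ l ∈ Finset.range i, (if l < m then 4 * N ^ (-(7:ℝ)/16) else 0))
        = ((Finset.range i).filter (· < m)).card * (4 * N ^ (-(7:ℝ)/16)) := by
          rw [h1, Finset.sum_const, nsmul_eq_mul]
      _ ≤ (m:ℝ) * (4 * N ^ (-(7:ℝ)/16)) := by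
          apply mul_le_mul_of_nonneg_right _ hc0
          exact_mod_cast h2
      _ ≤ (3 * N ^ ((5:ℝ)/12)) * (4 * N ^ (-(7:ℝ)/16)) :=
          mul_le_mul_of_nonneg_right hm_le hc0
      _ = 12 * (N ^ ((5:ℝ)/12) * N ^ (-(7:ℝ)/16)) := by ring
      _ = 12 * N ^ (-(1:ℝ)/48) := by rw [h3]
  calc (∑ l ∈ Finset.range i,
          Real.sqrt ((max (2 * Real.exp 1 * (l : ℝ) ^ ((3 : ℝ) / 2) / Real.sqrt N)
              (10 * N ^ ((1 : ℝ) / 8))) / N))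
      ≤ (i:ℝ) * M + (∑ l ∈ Finset.range i, (if l < m then 4 * N ^ (-(7:ℝ)/16) else 0)) := hsum
    _ ≤ Real.sqrt (2 * Real.exp 1) * (i : ℝ) ^ ((7 : ℝ) / 4) / N ^ ((3 : ℝ) / 4)
        + 12 * N ^ (-(1:ℝ)/48) := by rw [hmain]; exact add_le_add (le_refl _) herr
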